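/- In any planar linear arrangement of a tree on n vertices, the total cost is at most C(n,2) = n(n-1)/2. -/

import Mathlib

open SimpleGraph

attribute [local instance] Classical.propDecidable

/-- Length of an edge (as an unordered pair) in an arrangement. -/
noncomputable def edgeLen {V : Type*} [Fintype V] (π : V ≃ Fin (Fintype.card V)) :
    Sym2 V → ℕ :=
  Sym2.lift ⟨fun u v => ((π u : ℤ) - (π v : ℤ)).natAbs, fun u v => by
    simp only []; omega⟩

/-- Cost of a linear arrangement: sum of edge lengths. -/
noncomputable def cost {V : Type*} [Fintype V] (G : SimpleGraph V)
    (π : V ≃ Fin (Fintype.card V)) : ℕ :=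
  ∑ᶠ e ∈ G.edgeSet, edgeLen π e

/-- An arrangement is planar if no two edges cross. -/
def Planar {V : Type*} [Fintype V] (G : SimpleGraph V)
    (π : V ≃ Fin (Fintype.card V)) : Prop :=
  ∀ ⦃s t u v : V⦄, G.Adj s t → G.Adj u v → π s < π t → π u < π v → π s < π u →
    ¬(π u < π t ∧ π t < π v)

/-- An arrangement of a tree rooted at `r` is projective if it is planar and no
edge covers the root. -/
def Projective {V : Type*} [Fintype V] (G : SimpleGraph V) (r : V)
    (π : V ≃ Fin (Fintype.card V)) : Prop :=
  Planar G π ∧ ∀ ⦃u v : V⦄, G.Adj u v → ¬(π u < π r ∧ π r < π v)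

noncomputable def maxCost {V : Type*} [Fintype V] (G : SimpleGraph V) : ℕ :=
  sSup {c | ∃ π : V ≃ Fin (Fintype.card V), cost G π = c}

noncomputable def maxPlanar {V : Type*} [Fintype V] (G : SimpleGraph V) : ℕ :=
  sSup {c | ∃ π : V ≃ Fin (Fintype.card V), Planar G π ∧ cost G π = c}

noncomputable def maxProj {V : Type*} [Fintype V] (G : SimpleGraph V) (r : V) : ℕ :=
  sSup {c | ∃ π : V ≃ Fin (Fintype.card V), Projective G r π ∧ cost G π = c}

/-- `compSize G u v` : the number of vertices of the connected component of `v`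
after removing the edge `uv` (this is `n_u(v)`). -/
noncomputable def compSize {V : Type*} [Fintype V] (G : SimpleGraph V) (u v : V) : ℕ :=
  Nat.card {y : V // (G.deleteEdges {s(u, v)}).Reachable v y}

/-- The star graph: the vertex with value `0` (the hub) is adjacent to all others. -/
def starGraph (n : ℕ) : SimpleGraph (Fin n) :=
  SimpleGraph.fromRel (fun i _ => (i : ℕ) = 0)

/-- In a tree with a distinguished root `r`, there is a map assigning to each
edge an endpoint distinct from `r`, injectively (each edge gets its "child"
endpoint). -/
lemma tree_injection {V : Type*} (G : SimpleGraph V) (hG : G.IsTree) (r : V) :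
    ∃ Φ : Sym2 V → V, (∀ e ∈ G.edgeSet, Φ e ≠ r ∧ Φ e ∈ e) ∧
      ∀ e₁ ∈ G.edgeSet, ∀ e₂ ∈ G.edgeSet, Φ e₁ = Φ e₂ → e₁ = e₂ := by
  classical
  choose f hf hf' using (hG.existsUnique_path · r)
  have main : ∀ x y (h : G.Adj x y), (f x).length ≤ (f y).length →
      ∃ w, w ≠ r ∧ w ∈ s(x, y) ∧ ∃ hn : ¬ (f w).Nil,
        ((f w).firstDart hn).edge = s(x, y) := by
    intro x y h hle
    have hxy : x ≠ y := h.ne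
    have hynotmem : y ∉ (f x).support := by
      intro hy
      have ht : (f x).takeUntil y hy = Walk.cons h Walk.nil :=
        (hG.existsUnique_path x y).unique ((hf x).takeUntil hy)
          (Walk.IsPath.nil.cons (by simpa using hxy))
      have hdrop : (f x).dropUntil y hy = f y := hf' y _ ((hf x).dropUntil hy)
      have hspec := Walk.take_spec (f x) hy
      have hlen := congrArg Walk.length hspec
      rw [Walk.length_append, ht, hdrop] at hlen
      simp [Walk.length_cons] at hlen
      omega
    have hfy : f y = Walk.cons h.symm (f x) :=
      (hf' y _ (Walk.IsPath.cons (hf x) (by simpa using hynotmem))).symm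
    have hn : ¬ (f y).Nil := by rw [hfy]; exact Walk.not_nil_cons
    refine ⟨y, ?_, Sym2.mem_mk_right x y, hn, ?_⟩
    · intro hrfl
      subst hrfl
      have : f y = Walk.nil := (hf' y Walk.nil Walk.IsPath.nil).symm
      rw [this] at hn; simp at hn
    · have h1 : (f y).getVert 1 = x := by
        rw [hfy, Walk.getVert_cons_succ, Walk.getVert_zero]
      rw [Walk.edge_firstDart, show (f y).snd = x from h1, Sym2.eq_swap]
  set g : V → Sym2 V := fun w =>
    if hn : ¬ (f w).Nil then ((f w).firstDart hn).edge else s(r, r) with hg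
  have key : ∀ e ∈ G.edgeSet, ∃ w, w ≠ r ∧ w ∈ e ∧ g w = e := by
    intro e he
    induction e using Sym2.ind with
    | _ x y =>
      have h : G.Adj x y := he
      rcases le_total (f x).length (f y).length with hle | hle
      · obtain ⟨w, hw1, hw2, hn, hw3⟩ := main x y h hle
        exact ⟨w, hw1, hw2, (dif_pos hn).trans hw3⟩
      · rw [Sym2.eq_swap]
        obtain ⟨w, hw1, hw2, hn, hw3⟩ := main y x h.symm hle
        exact ⟨w, hw1, hw2, (dif_pos hn).trans hw3⟩
  choose Φ hΦr hΦmem hΦedge using key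
  classical
  refine ⟨fun e => if he : e ∈ G.edgeSet then Φ e he else r, ?_, ?_⟩
  · intro e he
    dsimp only
    rw [dif_pos he]
    exact ⟨hΦr e he, hΦmem e he⟩
  · intro e₁ h₁ e₂ h₂ heq
    dsimp only at heq
    rw [dif_pos h₁, dif_pos h₂] at heq
    rw [← hΦedge e₁ h₁, ← hΦedge e₂ h₂, heq]

/-- Key counting lemma: in a planar arrangement of a tree, the number of edges
of length at least `k` is at most `n - k`. -/
lemma key_count (n k : ℕ) (G : SimpleGraph (Fin n)) (hG : G.IsTree)
    (π : Fin n ≃ Fin (Fintype.card (Fin n))) (hπ : Planar G π) :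
    (G.edgeFinset.filter (fun e => k ≤ edgeLen π e)).card ≤ n - k := by
  classical
  set F := G.edgeFinset.filter (fun e => k ≤ edgeLen π e) with hF
  rcases F.eq_empty_or_nonempty with hFe | hFne
  · simp [hFe]
  obtain ⟨e0, he0F, hmin⟩ := F.exists_min_image (edgeLen π) hFne
  have main : ∀ x y : Fin n, G.Adj x y → s(x, y) ∈ F →
      (∀ e ∈ F, edgeLen π s(x, y) ≤ edgeLen π e) → (π x : ℕ) < (π y : ℕ) →
      F.card ≤ n - k := by
    intro x y hxy hmemF hminxy hab
    set a := (π x : ℕ) with ha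
    set b := (π y : ℕ) with hb
    have hlen0 : edgeLen π s(x, y) = b - a := by
      rw [show edgeLen π s(x, y) = ((π x : ℤ) - (π y : ℤ)).natAbs from rfl]
      omega
    have hkab : k ≤ b - a := by
      have := (Finset.mem_filter.mp hmemF).2
      omega
    have hbn : b < n := by
      have := (π y).isLt
      simpa [Fintype.card_fin] using this
    -- no edge of F has an endpoint strictly between a and b
    have hout : ∀ e ∈ F, ∀ w, w ∈ e → ¬(a < (π w : ℕ) ∧ (π w : ℕ) < b) := by
      have base : ∀ u v : Fin n, G.Adj u v → s(u, v) ∈ F → (π u : ℕ) < (π v : ℕ) →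
          ¬(a < (π u : ℕ) ∧ (π u : ℕ) < b) ∧ ¬(a < (π v : ℕ) ∧ (π v : ℕ) < b) := by
        intro u v huv hmem hpq
        set p := (π u : ℕ) with hp
        set q := (π v : ℕ) with hq
        have hlen : edgeLen π s(u, v) = q - p := by
          rw [show edgeLen π s(u, v) = ((π u : ℤ) - (π v : ℤ)).natAbs from rfl]
          omega
        have hminle : b - a ≤ q - p := by
          have := hminxy _ hmem
          omega
        constructor
        · rintro ⟨h1, h2⟩
          by_cases hqb : q ≤ b
          · omega
          · exact hπ hxy huv (Fin.lt_def.mpr hab) (Fin.lt_def.mpr hpq)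
              (Fin.lt_def.mpr h1) ⟨Fin.lt_def.mpr h2, Fin.lt_def.mpr (by omega)⟩
        · rintro ⟨h1, h2⟩
          by_cases hpa : p < a
          · exact hπ huv hxy (Fin.lt_def.mpr hpq) (Fin.lt_def.mpr hab)
              (Fin.lt_def.mpr hpa) ⟨Fin.lt_def.mpr h1, Fin.lt_def.mpr h2⟩
          · omega
      intro e heF w hw
      have hEdge : e ∈ G.edgeSet := by
        have := (Finset.mem_filter.mp heF).1
        rwa [mem_edgeFinset] at this
      induction e using Sym2.ind with
      | _ u v =>
        have huv : G.Adj u v := hEdge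
        have hwuv : w = u ∨ w = v := Sym2.mem_iff.mp hw
        have hne : (π u : ℕ) ≠ (π v : ℕ) := by
          intro hc
          exact huv.ne (π.injective (Fin.ext hc))
        rcases lt_or_gt_of_ne hne with hlt | hgt
        · have := base u v huv heF hlt
          rcases hwuv with rfl | rfl
          · exact this.1
          · exact this.2
        · have heF' : s(v, u) ∈ F := by rwa [Sym2.eq_swap] at heF
          have := base v u huv.symm heF' hgt
          rcases hwuv with rfl | rfl
          · exact this.2
          · exact this.1
    -- the set of allowed positions
    set S := Finset.univ.filter (fun w : Fin n => ¬(a < (π w : ℕ) ∧ (π w : ℕ) < b)) with hS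
    set T := Finset.univ.filter (fun w : Fin n => (a < (π w : ℕ) ∧ (π w : ℕ) < b)) with hT
    have hST : T.card + S.card = n := by
      have := Finset.card_filter_add_card_filter_not (s := (Finset.univ : Finset (Fin n)))
        (p := fun w : Fin n => (a < (π w : ℕ) ∧ (π w : ℕ) < b))
      simpa [hS, hT] using this
    have hTcard : b - a - 1 ≤ T.card := by
      have hsurj : Set.SurjOn (fun w : Fin n => (π w : ℕ)) ↑T ↑(Finset.Ioo a b) := by
        intro j hj
        simp only [Finset.coe_Ioo, Set.mem_Ioo] at hj
        have hjn : j < Fintype.card (Fin n) := by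
          rw [Fintype.card_fin]; omega
        refine ⟨π.symm ⟨j, hjn⟩, ?_, ?_⟩
        · simp only [hT, Finset.coe_filter, Set.mem_setOf_eq, Finset.mem_univ, true_and]
          simp [hj.1, hj.2]
        · simp
      have := Finset.card_le_card_of_surjOn _ hsurj
      simpa [Nat.card_Ioo] using this
    have hxS : x ∈ S := by
      simp only [hS, Finset.mem_filter, Finset.mem_univ, true_and]
      omega
    obtain ⟨Φ, hΦ, hΦinj⟩ := tree_injection G hG x
    have hFcard : F.card ≤ (S.erase x).card := by
      apply Finset.card_le_card_of_injOn Φ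
      · intro e heF
        have hEdge : e ∈ G.edgeSet := by
          have := (Finset.mem_filter.mp heF).1
          rwa [mem_edgeFinset] at this
        obtain ⟨hne, hmem⟩ := hΦ e hEdge
        refine Finset.mem_erase.mpr ⟨hne, ?_⟩
        simp only [hS, Finset.mem_filter, Finset.mem_univ, true_and]
        exact hout e heF _ hmem
      · intro e₁ h₁ e₂ h₂ heq
        have hE1 : e₁ ∈ G.edgeSet := by
          have := (Finset.mem_filter.mp h₁).1
          rwa [mem_edgeFinset] at this
        have hE2 : e₂ ∈ G.edgeSet := by
          have := (Finset.mem_filter.mp h₂).1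
          rwa [mem_edgeFinset] at this
        exact hΦinj e₁ hE1 e₂ hE2 heq
    have herase : (S.erase x).card = S.card - 1 := Finset.card_erase_of_mem hxS
    have hSpos : 1 ≤ S.card := Finset.card_pos.mpr ⟨x, hxS⟩
    omega
  obtain ⟨x, y, rfl⟩ : ∃ x y, e0 = s(x, y) := by
    induction e0 using Sym2.ind with
    | _ x y => exact ⟨x, y, rfl⟩
  have hxy : G.Adj x y := by
    have := (Finset.mem_filter.mp he0F).1
    rwa [mem_edgeFinset, mem_edgeSet] at this
  have hne : (π x : ℕ) ≠ (π y : ℕ) := fun hc => hxy.ne (π.injective (Fin.ext hc))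
  rcases lt_or_gt_of_ne hne with hlt | hgt
  · exact main x y hxy he0F hmin hlt
  · have he0F' : s(y, x) ∈ F := by rwa [Sym2.eq_swap] at he0F
    have hmin' : ∀ e ∈ F, edgeLen π s(y, x) ≤ edgeLen π e := by
      intro e he
      rw [Sym2.eq_swap]
      exact hmin e he
    exact main y x hxy.symm he0F' hmin' hgt

lemma gauss_sum_aux (n : ℕ) : ∑ k ∈ Finset.Icc 1 (n - 1), (n - k) = n.choose 2 := by
  have h1 : ∑ k ∈ Finset.Icc 1 (n - 1), (n - k) = ∑ k ∈ Finset.Icc 1 (n - 1), k := by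
    apply Finset.sum_nbij' (fun k => n - k) (fun k => n - k) <;>
      intro a ha <;> simp only [Finset.mem_Icc] at * <;> omega
  rw [h1]
  rcases n with _ | m
  · simp
  · have h2 : Finset.range (m + 1) = insert 0 (Finset.Icc 1 m) := by
      ext j
      simp only [Finset.mem_range, Finset.mem_insert, Finset.mem_Icc]
      omega
    have h3 : ∑ k ∈ Finset.range (m + 1), k = ∑ k ∈ Finset.Icc 1 m, k := by
      rw [h2, Finset.sum_insert (by simp), Nat.zero_add]
    have h4 := Finset.sum_range_id_mul_two (m + 1)
    have h5 : (m + 1).choose 2 = (m + 1) * m / 2 := by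
      rw [Nat.choose_two_right]
      simp
    simp only [Nat.add_sub_cancel] at *
    omega

/-- In any planar arrangement of a tree on `n` vertices, the cost is at most
`n choose 2`. -/
theorem planar_cost_le_choose (n : ℕ) (G : SimpleGraph (Fin n)) (hG : G.IsTree)
    (π : Fin n ≃ Fin (Fintype.card (Fin n))) (hπ : Planar G π) :
    cost G π ≤ n.choose 2 := by
  classical
  have hcost : cost G π = ∑ e ∈ G.edgeFinset, edgeLen π e := by
    rw [cost, ← coe_edgeFinset, finsum_mem_coe_finset]
  have hbound : ∀ e ∈ G.edgeFinset, 1 ≤ edgeLen π e ∧ edgeLen π e ≤ n - 1 := by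
    intro e he
    rw [mem_edgeFinset] at he
    induction e using Sym2.ind with
    | _ u v =>
      have huv : G.Adj u v := he
      have hne : (π u : ℕ) ≠ (π v : ℕ) := fun hc => huv.ne (π.injective (Fin.ext hc))
      have h1 : (π u : ℕ) < n := by simpa using (π u).isLt
      have h2 : (π v : ℕ) < n := by simpa using (π v).isLt
      have hrep : edgeLen π s(u, v) = ((π u : ℤ) - (π v : ℤ)).natAbs := rfl
      constructor
      · rw [hrep]; omega
      · rw [hrep]; omega
  have hswap : ∑ e ∈ G.edgeFinset, edgeLen π e
      = ∑ k ∈ Finset.Icc 1 (n - 1),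
          (G.edgeFinset.filter (fun e => k ≤ edgeLen π e)).card := by
    calc ∑ e ∈ G.edgeFinset, edgeLen π e
        = ∑ e ∈ G.edgeFinset,
            ((Finset.Icc 1 (n - 1)).filter (fun k => k ≤ edgeLen π e)).card := by
          refine Finset.sum_congr rfl fun e he => ?_
          have h := hbound e he
          have heq : (Finset.Icc 1 (n - 1)).filter (fun k => k ≤ edgeLen π e)
              = Finset.Icc 1 (edgeLen π e) := by
            ext j
            simp only [Finset.mem_filter, Finset.mem_Icc]
            omega
          rw [heq, Nat.card_Icc]
          omega
      _ = ∑ e ∈ G.edgeFinset, ∑ k ∈ Finset.Icc 1 (n - 1),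
            if k ≤ edgeLen π e then 1 else 0 := by
          refine Finset.sum_congr rfl fun e _ => ?_
          rw [Finset.card_filter]
      _ = ∑ k ∈ Finset.Icc 1 (n - 1), ∑ e ∈ G.edgeFinset,
            if k ≤ edgeLen π e then 1 else 0 := Finset.sum_comm
      _ = ∑ k ∈ Finset.Icc 1 (n - 1),
            (G.edgeFinset.filter (fun e => k ≤ edgeLen π e)).card := by
          refine Finset.sum_congr rfl fun k _ => ?_
          rw [Finset.card_filter]
  rw [hcost, hswap, ← gauss_sum_aux n]
  apply Finset.sum_le_sum
  intro k _
  exact key_count n k G hG π hπ
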